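/- Let L_{π_k}(π) = η(π_k) + Σ_s ρ_{π_k}(s) Σ_a π(a|s) A_{π_k}(s,a) and let π_{k+1} maximize L_{π_k}(π) subject to E_{s∼ρ_{π_k}}[D_TV(π_k(·|s), π(·|s))] ≤ δ_k. Then L_{π_k}(π_{k+1}) − L_{π_k}(π_k) ≥ min(1, (1−γ)δ_k) · A*_{π_k}, where A*_{π_k} = max_π (L_{π_k}(π) − L_{π_k}(π_k)) ≥ 0. -/
import Mathlib


open scoped BigOperators

def IsPolicy {S A : Type} [Fintype A] (π : S → A → ℝ) : Prop :=
  (∀ s a, 0 ≤ π s a) ∧ ∀ s, ∑ a, π s a = 1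

/-- Total variation distance between two distributions on a finite action set. -/
noncomputable def DTV {A : Type} [Fintype A] (p q : A → ℝ) : ℝ :=
  (1/2) * ∑ a, |p a - q a|

lemma DTV_le_one {A : Type} [Fintype A] (p q : A → ℝ)
    (hp : ∀ a, 0 ≤ p a) (hq : ∀ a, 0 ≤ q a)
    (hps : ∑ a, p a = 1) (hqs : ∑ a, q a = 1) : DTV p q ≤ 1 := by
  unfold DTV
  have h : ∑ a, |p a - q a| ≤ ∑ a, (p a + q a) := by
    apply Finset.sum_le_sum
    intro a _
    have h1 := hp a
    have h2 := hq a
    rcases abs_cases (p a - q a) with ⟨h, _⟩ | ⟨h, _⟩ <;> linarith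
  rw [Finset.sum_add_distrib, hps, hqs] at h
  linarith

/-- Let `L_{π_k}(π) = η(π_k) + Σ_s ρ_{π_k}(s) Σ_a π(a|s) A_{π_k}(s,a)` and
let `π_{k+1}` maximize `L_{π_k}` over the TV trust region of radius `δ_k`. Then
`L_{π_k}(π_{k+1}) − L_{π_k}(π_k) ≥ min(1, (1−γ)δ_k) · A*_{π_k}`, where
`A*_{π_k} = max_π (L_{π_k}(π) − L_{π_k}(π_k)) ≥ 0`. -/
theorem stmt7 {S A : Type} [Fintype S] [Fintype A]
    (γ δ ηk Astar : ℝ) (hγ : 0 < γ ∧ γ < 1) (hδ : 0 < δ)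
    (ρ : S → ℝ) (hρ : ∀ s, 0 ≤ ρ s) (hρsum : ∑ s, ρ s = 1 / (1 - γ))
    (F : S → A → ℝ)
    (L : (S → A → ℝ) → ℝ)
    (hL : ∀ π, L π = ηk + ∑ s, ρ s * ∑ a, π s a * F s a)
    (πk : S → A → ℝ) (hπk : IsPolicy πk)
    (hLπk : L πk = ηk)
    (hAstar : IsGreatest {x : ℝ | ∃ π, IsPolicy π ∧ x = L π - L πk} Astar)
    (πk1 : S → A → ℝ) (hπk1 : IsPolicy πk1)
    (hfeas : ∑ s, ρ s * DTV (πk s) (πk1 s) ≤ δ)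
    (hmax : ∀ π, IsPolicy π → ∑ s, ρ s * DTV (πk s) (π s) ≤ δ → L π ≤ L πk1) :
    0 ≤ Astar ∧ L πk1 - L πk ≥ min 1 ((1 - γ) * δ) * Astar := by
  obtain ⟨hγ0, hγ1⟩ := hγ
  have h1γ : 0 < 1 - γ := by linarith
  have hA0 : 0 ≤ Astar := hAstar.2 ⟨πk, hπk, by ring⟩
  refine ⟨hA0, ?_⟩
  obtain ⟨πs, hπs, hAeq⟩ := hAstar.1
  set β := min 1 ((1 - γ) * δ) with hβdef
  have hβ0 : 0 ≤ β := le_min zero_le_one (by positivity)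
  have hβ1 : β ≤ 1 := min_le_left _ _
  have hβδ : β ≤ (1 - γ) * δ := min_le_right _ _
  set πb : S → A → ℝ := fun s a => (1 - β) * πk s a + β * πs s a with hπbdef
  have hπb : IsPolicy πb := by
    constructor
    · intro s a
      have := hπk.1 s a
      have := hπs.1 s a
      have : 0 ≤ 1 - β := by linarith
      positivity
    · intro s
      simp only [hπbdef, Finset.sum_add_distrib, ← Finset.mul_sum, hπk.2 s, hπs.2 s]
      ring
  have hfeasb : ∑ s, ρ s * DTV (πk s) (πb s) ≤ δ := by
    have hDTV : ∀ s, DTV (πk s) (πb s) = β * DTV (πk s) (πs s) := by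
      intro s
      unfold DTV
      have habs : ∀ a, |πk s a - πb s a| = β * |πk s a - πs s a| := by
        intro a
        have h : πk s a - πb s a = β * (πk s a - πs s a) := by simp [hπbdef]; ring
        rw [h, abs_mul, abs_of_nonneg hβ0]
      simp only [habs, ← Finset.mul_sum]
      ring
    calc ∑ s, ρ s * DTV (πk s) (πb s) = β * ∑ s, ρ s * DTV (πk s) (πs s) := by
          rw [Finset.mul_sum]
          exact Finset.sum_congr rfl fun s _ => by rw [hDTV s]; ring
      _ ≤ β * ∑ s, ρ s * 1 := by
          apply mul_le_mul_of_nonneg_left _ hβ0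
          apply Finset.sum_le_sum
          intro s _
          exact mul_le_mul_of_nonneg_left
            (DTV_le_one _ _ (hπk.1 s) (hπs.1 s) (hπk.2 s) (hπs.2 s)) (hρ s)
      _ = β * (1 / (1 - γ)) := by simp [hρsum]
      _ ≤ ((1 - γ) * δ) * (1 / (1 - γ)) := by
          apply mul_le_mul_of_nonneg_right hβδ
          positivity
      _ = δ := by field_simp
  have hLb : L πb - L πk = β * Astar := by
    rw [hAeq, hL πb, hL πs, hLπk]
    have : ∀ s, ∑ a, πb s a * F s a
        = (1 - β) * ∑ a, πk s a * F s a + β * ∑ a, πs s a * F s a := by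
      intro s
      rw [Finset.mul_sum, Finset.mul_sum, ← Finset.sum_add_distrib]
      exact Finset.sum_congr rfl fun a _ => by simp [hπbdef]; ring
    simp only [this]
    have hsum : ∑ s, ρ s * ((1 - β) * ∑ a, πk s a * F s a + β * ∑ a, πs s a * F s a)
        = (1 - β) * ∑ s, ρ s * ∑ a, πk s a * F s a
          + β * ∑ s, ρ s * ∑ a, πs s a * F s a := by
      rw [Finset.mul_sum, Finset.mul_sum, ← Finset.sum_add_distrib]
      exact Finset.sum_congr rfl fun s _ => by ring
    rw [hsum]
    have hLk : ηk + ∑ s, ρ s * ∑ a, πk s a * F s a = ηk := by rw [← hL πk, hLπk]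
    have : ∑ s, ρ s * ∑ a, πk s a * F s a = 0 := by linarith
    rw [this]
    ring
  have := hmax πb hπb hfeasb
  linarith
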